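/- If two finite-outcome POVMs A and B on ℂ^d satisfy A_i B_j + B_j A_i ≥ 0 for all outcomes i, j, then A and B are compatible, with joint POVM G(i,j) = (A_i B_j + B_j A_i)/2. -/

import Mathlib

open Matrix BigOperators
open scoped ComplexOrder

/-- Jordan product criterion: if `AᵢBⱼ + BⱼAᵢ ≥ 0` for all outcomes, then the POVMs
`A` and `B` are compatible, with joint POVM `G(i,j) = (AᵢBⱼ + BⱼAᵢ)/2`. -/
theorem jordan_product_criterion {d k l : ℕ}
    (A : Fin k → Matrix (Fin d) (Fin d) ℂ) (B : Fin l → Matrix (Fin d) (Fin d) ℂ)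
    (hA : ∀ i, (A i).PosSemidef) (hAsum : ∑ i, A i = 1)
    (hB : ∀ j, (B j).PosSemidef) (hBsum : ∑ j, B j = 1)
    (hJordan : ∀ i j, (A i * B j + B j * A i).PosSemidef) :
    (∀ i j, (((1 : ℂ)/2) • (A i * B j + B j * A i)).PosSemidef) ∧
    (∀ i, ∑ j, ((1 : ℂ)/2) • (A i * B j + B j * A i) = A i) ∧
    (∀ j, ∑ i, ((1 : ℂ)/2) • (A i * B j + B j * A i) = B j) := by
  refine ⟨fun i j => ?_, fun i => ?_, fun j => ?_⟩
  · obtain ⟨hH, hpos⟩ := hJordan i j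
    refine ⟨?_, fun x => ?_⟩
    · unfold Matrix.IsHermitian at *
      rw [Matrix.conjTranspose_smul, hH]
      congr 1
      apply Complex.ext <;> simp
    · have key : (x.sum fun a xa => x.sum fun b xb => star xa * (((1:ℂ)/2) • (A i * B j + B j * A i)) a b * xb) = ((1:ℂ)/2) • (x.sum fun a xa => x.sum fun b xb => star xa * (A i * B j + B j * A i) a b * xb) := by
        unfold Finsupp.sum
        rw [smul_eq_mul, Finset.mul_sum]
        refine Finset.sum_congr rfl fun a _ => ?_
        rw [Finset.mul_sum]
        refine Finset.sum_congr rfl fun b _ => ?_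
        simp only [Matrix.smul_apply, smul_eq_mul]
        ring
      rw [key]
      have := hpos x
      have h2 : ((1:ℂ)/2) = ((1/2 : ℝ) : ℂ) := by norm_num
      rw [h2]
      have : (0:ℂ) ≤ ((1/2:ℝ):ℂ) := by rw [Complex.zero_le_real]; norm_num
      rw [smul_eq_mul]
      exact mul_nonneg this ‹_›
  · rw [← Finset.smul_sum]
    have : ∑ j, (A i * B j + B j * A i) = A i * (∑ j, B j) + (∑ j, B j) * A i := by
      rw [Finset.sum_add_distrib, Finset.mul_sum, Finset.sum_mul]
    rw [this, hBsum, mul_one, one_mul, smul_add]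
    module
  · rw [← Finset.smul_sum]
    have : ∑ i, (A i * B j + B j * A i) = (∑ i, A i) * B j + B j * (∑ i, A i) := by
      rw [Finset.sum_add_distrib, Finset.sum_mul, Finset.mul_sum]
    rw [this, hAsum, mul_one, one_mul, smul_add]
    module
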